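/- Let T be a tree and S = (S_A, S_B, S_C) a labeling of T such that (T, S) belongs to the family 𝒯. Then |S_A| = 2(n(T) − l(T) + 2)/5, where n(T) is the order of T and l(T) its number of leaves. -/

import Mathlib

open SimpleGraph

/-- A dominating set: every vertex outside `S` has a neighbor in `S`. -/
def IsDominatingSet {V : Type} (G : SimpleGraph V) (S : Set V) : Prop :=
  ∀ v ∉ S, ∃ u ∈ S, G.Adj u v

/-- A total dominating set: every vertex has a neighbor in `S`. -/
def IsTotalDominatingSet {V : Type} (G : SimpleGraph V) (S : Set V) : Prop :=
  ∀ v : V, ∃ u ∈ S, G.Adj u v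

/-- `u` is within distance two of `v`. -/
def WithinTwo {V : Type} (G : SimpleGraph V) (u v : V) : Prop :=
  G.Adj u v ∨ ∃ w, G.Adj u w ∧ G.Adj w v

/-- A semitotal dominating set: a dominating set in which every vertex is within
distance two of another vertex of the set. -/
def IsSemitotalDominatingSet {V : Type} (G : SimpleGraph V) (S : Set V) : Prop :=
  IsDominatingSet G S ∧ ∀ v ∈ S, ∃ u ∈ S, u ≠ v ∧ WithinTwo G u v

/-- The domination number `γ(G)`. -/
noncomputable def dominationNumber {V : Type} (G : SimpleGraph V) : ℕ :=
  sInf {n | ∃ S : Set V, IsDominatingSet G S ∧ S.ncard = n}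

/-- The total domination number `γ_t(G)`. -/
noncomputable def totalDominationNumber {V : Type} (G : SimpleGraph V) : ℕ :=
  sInf {n | ∃ S : Set V, IsTotalDominatingSet G S ∧ S.ncard = n}

/-- The semitotal domination number `γ_t2(G)`. -/
noncomputable def semitotalDominationNumber {V : Type} (G : SimpleGraph V) : ℕ :=
  sInf {n | ∃ S : Set V, IsSemitotalDominatingSet G S ∧ S.ncard = n}

/-- A leaf: a vertex of degree one. -/
def IsLeaf {V : Type} (G : SimpleGraph V) (v : V) : Prop :=
  (G.neighborSet v).ncard = 1

/-- A support vertex: a vertex adjacent to a leaf. -/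
def IsSupport {V : Type} (G : SimpleGraph V) (v : V) : Prop :=
  ∃ u, G.Adj v u ∧ IsLeaf G u

/-- A star: a graph isomorphic to `K_{1,m}` for some `m ≥ 1`. -/
def IsStar {V : Type} (G : SimpleGraph V) : Prop :=
  ∃ m : ℕ, 1 ≤ m ∧ Nonempty (G ≃g completeBipartiteGraph Unit (Fin m))

/-- The graph obtained from the disjoint union of `G` and `H` by adding
the single edge joining `v : V` to `w : W`. -/
def attach {V W : Type} (G : SimpleGraph V) (H : SimpleGraph W) (v : V) (w : W) :
    SimpleGraph (V ⊕ W) where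
  Adj x y :=
    match x, y with
    | Sum.inl a, Sum.inl b => G.Adj a b
    | Sum.inr a, Sum.inr b => H.Adj a b
    | Sum.inl a, Sum.inr b => a = v ∧ b = w
    | Sum.inr a, Sum.inl b => b = v ∧ a = w
  symm := by
    constructor
    rintro (a | a) (b | b) h
    · exact h.symm
    · exact ⟨h.1, h.2⟩
    · exact ⟨h.1, h.2⟩
    · exact h.symm
  loopless := by
    constructor
    rintro (a | a) h
    · exact G.ne_of_adj h rfl
    · exact H.ne_of_adj h rfl

/-- The statuses used to label the vertices of trees in the family `𝒯`. -/
inductive Label : Type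
  | A | B | C
deriving DecidableEq

/-- The labeling of the path `P₅` assigning `A` to the two support vertices,
`C` to the two leaves and `B` to the center. -/
def pathLabel : Fin 5 → Label
  | 0 => Label.C
  | 1 => Label.A
  | 2 => Label.B
  | 3 => Label.A
  | 4 => Label.C

/-- The family `𝒯` of labeled trees: it contains the labeled path `P₅`, and is closed
under operation `𝒪₁` (attach a new leaf labeled `C` to a vertex labeled `A`), operation
`𝒪₂` (attach a labeled path `P₅` to a degree-one vertex labeled `C`), and under
isomorphism of labeled graphs. -/
inductive TFamily : ∀ {V : Type}, SimpleGraph V → (V → Label) → Prop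
  | base : TFamily (SimpleGraph.pathGraph 5) pathLabel
  | op1 {V : Type} {G : SimpleGraph V} {f : V → Label} (v : V)
      (hv : f v = Label.A) (h : TFamily G f) :
      TFamily (attach G (⊥ : SimpleGraph (Fin 1)) v 0)
        (Sum.elim f (fun _ => Label.C))
  | op2 {V : Type} {G : SimpleGraph V} {f : V → Label} (v : V)
      (hv : f v = Label.C) (hdeg : (G.neighborSet v).ncard = 1) (h : TFamily G f) :
      TFamily (attach G (SimpleGraph.pathGraph 5) v 0) (Sum.elim f pathLabel)
  | iso {V W : Type} {G : SimpleGraph V} {H : SimpleGraph W} {f : V → Label}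
      (e : G ≃g H) (h : TFamily G f) : TFamily H (fun w => f (e.symm w))

/-- The subdivided star with `t` leaves: center `none`, and for each `i : Fin t`
a path `none — some (i,0) — some (i,1)`. -/
def subdividedStar (t : ℕ) : SimpleGraph (Option (Fin t × Fin 2)) :=
  SimpleGraph.fromRel (fun x y =>
    match x, y with
    | none, some p => p.2 = 0
    | some p, some q => p.1 = q.1 ∧ p.2 = 0 ∧ q.2 = 1
    | _, _ => False)

/-- The tree `Y` with three leaves, obtained from the star `K_{1,3}` with center `0`
by subdividing exactly one edge: edges `0-1`, `0-2`, `0-3`, `3-4`.  Its leaves are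
`1`, `2`, `4`; the leaf-neighbors of the center are `1` and `2`. -/
def Ytree : SimpleGraph (Fin 5) :=
  SimpleGraph.fromRel (fun x y =>
    (x = 0 ∧ y = 1) ∨ (x = 0 ∧ y = 2) ∨ (x = 0 ∧ y = 3) ∨ (x = 3 ∧ y = 4))

/-- An almost dominating set of `G` relative to `v`: dominates every vertex except
possibly `v`. -/
def IsAlmostDominatingSet {V : Type} (G : SimpleGraph V) (v : V) (S : Set V) : Prop :=
  ∀ w, w ≠ v → w ∉ S → ∃ u ∈ S, G.Adj u w

/-- The almost domination number `γ(G; v)`. -/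
noncomputable def almostDominationNumber {V : Type} (G : SimpleGraph V) (v : V) : ℕ :=
  sInf {n | ∃ S : Set V, IsAlmostDominatingSet G v S ∧ S.ncard = n}

/-- The family `𝒪` of trees: all trees obtainable from the path `P₄` by a finite
sequence of the operations `𝒪₁`–`𝒪₄` (and taking isomorphic copies). -/
inductive OFamily : ∀ {V : Type}, SimpleGraph V → Prop
  | base : OFamily (SimpleGraph.pathGraph 4)
  | op1 {V : Type} {G : SimpleGraph V} (v : V)
      (hv : ∃ S : Set V, IsSemitotalDominatingSet G S ∧
        S.ncard = semitotalDominationNumber G ∧ v ∈ S)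
      (h : OFamily G) :
      OFamily (attach G (⊥ : SimpleGraph (Fin 1)) v 0)
  | op2short {V : Type} {G : SimpleGraph V} (v : V)
      (hv : almostDominationNumber G v = dominationNumber G) (h : OFamily G) :
      OFamily (attach G (SimpleGraph.pathGraph 2) v 0)
  | op2long {V : Type} {G : SimpleGraph V} (v : V)
      (hv : almostDominationNumber G v = dominationNumber G) (h : OFamily G) :
      OFamily (attach G (SimpleGraph.pathGraph 5) v 0)
  | op3 {V : Type} {G : SimpleGraph V} (v : V) (t : ℕ) (ht : 2 ≤ t) (h : OFamily G) :
      OFamily (attach G (subdividedStar t) v none)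
  | op4 {V : Type} {G : SimpleGraph V} (v : V) (h : OFamily G) :
      OFamily (attach G Ytree v 1)
  | iso {V W : Type} {G : SimpleGraph V} {H : SimpleGraph W}
      (e : G ≃g H) (h : OFamily G) : OFamily H
section AuxProof

open SimpleGraph Sum

instance pathGraphAdjDec {n : ℕ} : DecidableRel (SimpleGraph.pathGraph n).Adj :=
  fun u v => decidable_of_iff _ (SimpleGraph.pathGraph_adj (u := u) (v := v)).symm

lemma ncard_neighborSet_eq_degree {V : Type} [Fintype V] (G : SimpleGraph V)
    [DecidableRel G.Adj] (x : V) : (G.neighborSet x).ncard = G.degree x := by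
  rw [Set.ncard_eq_toFinset_card', ← SimpleGraph.card_neighborFinset_eq_degree]
  rfl

lemma leaf_iff_degree {V : Type} [Fintype V] (G : SimpleGraph V)
    [DecidableRel G.Adj] (x : V) : IsLeaf G x ↔ G.degree x = 1 := by
  unfold IsLeaf
  rw [ncard_neighborSet_eq_degree]

section AttachLemmas

variable {V W : Type} {G : SimpleGraph V} {H : SimpleGraph W} {v : V} {w : W}

lemma attach_ns_inl {a : V} (ha : a ≠ v) :
    (attach G H v w).neighborSet (Sum.inl a) = Sum.inl '' G.neighborSet a := by
  ext x
  cases x with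
  | inl b =>
    show G.Adj a b ↔ _
    simp
  | inr b =>
    show (a = v ∧ b = w) ↔ _
    simp [ha]

lemma attach_ns_inl_v :
    (attach G H v w).neighborSet (Sum.inl v) =
      insert (Sum.inr w) (Sum.inl '' G.neighborSet v) := by
  ext x
  cases x with
  | inl b =>
    show G.Adj v b ↔ _
    simp
  | inr b =>
    show (v = v ∧ b = w) ↔ _
    simp

lemma attach_ns_inr {b : W} (hb : b ≠ w) :
    (attach G H v w).neighborSet (Sum.inr b) = Sum.inr '' H.neighborSet b := by
  ext x
  cases x with
  | inl c =>
    show (c = v ∧ b = w) ↔ _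
    simp [hb]
  | inr c =>
    show H.Adj b c ↔ _
    simp

lemma attach_ns_inr_w :
    (attach G H v w).neighborSet (Sum.inr w) =
      insert (Sum.inl v) (Sum.inr '' H.neighborSet w) := by
  ext x
  cases x with
  | inl c =>
    show (c = v ∧ w = w) ↔ _
    simp
  | inr c =>
    show H.Adj w c ↔ _
    simp

lemma ncard_attach_ns_inl {a : V} (ha : a ≠ v) :
    ((attach G H v w).neighborSet (Sum.inl a)).ncard = (G.neighborSet a).ncard := by
  rw [attach_ns_inl ha, Set.ncard_image_of_injective _ Sum.inl_injective]

lemma ncard_attach_ns_inl_v [Finite V] :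
    ((attach G H v w).neighborSet (Sum.inl v)).ncard = (G.neighborSet v).ncard + 1 := by
  rw [attach_ns_inl_v, Set.ncard_insert_of_notMem (by simp)
    ((Set.toFinite _).image _), Set.ncard_image_of_injective _ Sum.inl_injective]

lemma ncard_attach_ns_inr {b : W} (hb : b ≠ w) :
    ((attach G H v w).neighborSet (Sum.inr b)).ncard = (H.neighborSet b).ncard := by
  rw [attach_ns_inr hb, Set.ncard_image_of_injective _ Sum.inr_injective]

lemma ncard_attach_ns_inr_w [Finite W] :
    ((attach G H v w).neighborSet (Sum.inr w)).ncard = (H.neighborSet w).ncard + 1 := by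
  rw [attach_ns_inr_w, Set.ncard_insert_of_notMem (by simp)
    ((Set.toFinite _).image _), Set.ncard_image_of_injective _ Sum.inr_injective]

lemma attach_leaf_inl {a : V} (ha : a ≠ v) :
    IsLeaf (attach G H v w) (Sum.inl a) ↔ IsLeaf G a := by
  unfold IsLeaf
  rw [ncard_attach_ns_inl ha]

lemma attach_leaf_inr {b : W} (hb : b ≠ w) :
    IsLeaf (attach G H v w) (Sum.inr b) ↔ IsLeaf H b := by
  unfold IsLeaf
  rw [ncard_attach_ns_inr hb]

end AttachLemmas

/-- facts about `P₅`. -/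
lemma path5_label_A : {x : Fin 5 | pathLabel x = Label.A} = {1, 3} := by
  ext x
  fin_cases x <;> simp [pathLabel] <;> decide

lemma path5_leaves : {x : Fin 5 | IsLeaf (SimpleGraph.pathGraph 5) x} = {0, 4} := by
  ext x
  rw [Set.mem_setOf_eq, leaf_iff_degree]
  fin_cases x <;> simp <;> decide

lemma path5_degree_A : ∀ x : Fin 5, pathLabel x = Label.A →
    2 ≤ ((SimpleGraph.pathGraph 5).neighborSet x).ncard := by
  intro x hx
  rw [ncard_neighborSet_eq_degree]
  fin_cases x <;> first | (exfalso; exact absurd hx (by decide)) | decide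

lemma tFamily_aux {V : Type} {G : SimpleGraph V} {f : V → Label} (h : TFamily G f) :
    ∀ (_ : Finite V),
      (5 * {x | f x = Label.A}.ncard + 2 * {x | IsLeaf G x}.ncard
        = 2 * Nat.card V + 4) ∧
      (∀ x, f x = Label.A → 2 ≤ (G.neighborSet x).ncard) := by
  induction h with
  | base =>
    intro _
    constructor
    · rw [path5_label_A, path5_leaves, Set.ncard_pair (by decide),
        Set.ncard_pair (by decide)]
      simp
    · exact path5_degree_A
  | @op1 V G f v hv h ih =>
    intro hfin
    have hVfin : Finite V :=
      Finite.of_injective (Sum.inl : V → V ⊕ Fin 1) Sum.inl_injective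
    obtain ⟨ih1, ih2⟩ := ih hVfin
    have hvdeg : 2 ≤ (G.neighborSet v).ncard := ih2 v hv
    have hAset : {x : V ⊕ Fin 1 | Sum.elim f (fun _ => Label.C) x = Label.A}
        = Sum.inl '' {a | f a = Label.A} := by
      ext x
      cases x with
      | inl a => simp
      | inr b => simp
    have hleafset : {x : V ⊕ Fin 1 | IsLeaf (attach G (⊥ : SimpleGraph (Fin 1)) v 0) x}
        = insert (Sum.inr 0) (Sum.inl '' {a | IsLeaf G a}) := by
      ext x
      cases x with
      | inl a =>
        rcases eq_or_ne a v with rfl | ha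
        · simp only [Set.mem_setOf_eq, Set.mem_insert_iff, Set.mem_image]
          constructor
          · intro hx
            exfalso
            unfold IsLeaf at hx
            rw [ncard_attach_ns_inl_v] at hx
            omega
          · rintro (h | ⟨b, hb, hba⟩)
            · exact absurd h (by simp)
            · obtain rfl : b = a := Sum.inl_injective hba
              exfalso
              have hh : (G.neighborSet b).ncard = 1 := hb
              omega
        · rw [Set.mem_setOf_eq, attach_leaf_inl ha]
          simp [Set.mem_image]
      | inr b =>
        have hb0 : b = 0 := Subsingleton.elim b 0
        subst hb0
        have hl : IsLeaf (attach G (⊥ : SimpleGraph (Fin 1)) v 0) (Sum.inr 0) := by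
          unfold IsLeaf
          rw [ncard_attach_ns_inr_w,
            show ((⊥ : SimpleGraph (Fin 1)).neighborSet 0) = ∅ from by ext; simp]
          simp
        simp [hl]
    have hcard : Nat.card (V ⊕ Fin 1) = Nat.card V + 1 := by
      rw [Nat.card_sum, show Nat.card (Fin 1) = 1 from by simp]
    constructor
    · rw [hAset, hleafset, Set.ncard_image_of_injective _ Sum.inl_injective,
        Set.ncard_insert_of_notMem (by simp) ((Set.toFinite _).image _),
        Set.ncard_image_of_injective _ Sum.inl_injective, hcard]
      omega
    · intro x hx
      cases x with
      | inl a =>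
        have ha : f a = Label.A := by simpa using hx
        rcases eq_or_ne a v with rfl | hav
        · rw [ncard_attach_ns_inl_v]
          omega
        · rw [ncard_attach_ns_inl hav]
          exact ih2 a ha
      | inr b => exact absurd hx (by simp)
  | @op2 V G f v hv hdeg h ih =>
    intro hfin
    have hVfin : Finite V :=
      Finite.of_injective (Sum.inl : V → V ⊕ Fin 5) Sum.inl_injective
    obtain ⟨ih1, ih2⟩ := ih hVfin
    have hvleaf : IsLeaf G v := hdeg
    have hAset : {x : V ⊕ Fin 5 | Sum.elim f pathLabel x = Label.A}
        = Sum.inl '' {a | f a = Label.A} ∪ Sum.inr '' {(1 : Fin 5), 3} := by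
      ext x
      cases x with
      | inl a => simp
      | inr b =>
        simp only [Set.mem_setOf_eq, Sum.elim_inr, Set.mem_union, Set.mem_image]
        rw [← path5_label_A]
        constructor
        · intro hb
          right
          exact ⟨b, hb, rfl⟩
        · rintro (⟨a, _, hc⟩ | ⟨c, hc, hcb⟩)
          · exact absurd hc (by simp)
          · obtain rfl : c = b := Sum.inr_injective hcb
            exact hc
    have hleafset : {x : V ⊕ Fin 5 | IsLeaf (attach G (SimpleGraph.pathGraph 5) v 0) x}
        = insert (Sum.inr 4) (Sum.inl '' ({a | IsLeaf G a} \ {v})) := by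
      ext x
      cases x with
      | inl a =>
        rcases eq_or_ne a v with rfl | ha
        · simp only [Set.mem_setOf_eq, Set.mem_insert_iff, Set.mem_image,
            Set.mem_diff, Set.mem_singleton_iff]
          constructor
          · intro hx
            exfalso
            unfold IsLeaf at hx
            rw [ncard_attach_ns_inl_v, hdeg] at hx
            omega
          · rintro (h | ⟨b, ⟨_, hbv⟩, hba⟩)
            · exact absurd h (by simp)
            · exact absurd (Sum.inl_injective hba) hbv
        · rw [Set.mem_setOf_eq, attach_leaf_inl ha]
          constructor
          · intro hx
            right
            exact ⟨a, ⟨hx, ha⟩, rfl⟩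
          · rintro (h | ⟨b, ⟨hb, _⟩, hba⟩)
            · exact absurd h (by simp)
            · obtain rfl : b = a := Sum.inl_injective hba
              exact hb
      | inr b =>
        rcases eq_or_ne b 0 with rfl | hb
        · simp only [Set.mem_setOf_eq, Set.mem_insert_iff, Set.mem_image]
          constructor
          · intro hx
            exfalso
            unfold IsLeaf at hx
            rw [ncard_attach_ns_inr_w, ncard_neighborSet_eq_degree] at hx
            revert hx
            decide
          · rintro (h | ⟨a, _, ha⟩)
            · exact absurd h (by simp)
            · exact absurd ha (by simp)
        · rw [Set.mem_setOf_eq, attach_leaf_inr hb]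
          have : IsLeaf (SimpleGraph.pathGraph 5) b ↔ b ∈ ({0, 4} : Set (Fin 5)) := by
            rw [← path5_leaves]; rfl
          rw [this]
          simp only [Set.mem_insert_iff, Set.mem_singleton_iff, Set.mem_image]
          constructor
          · rintro (rfl | rfl)
            · exact absurd rfl hb
            · left; rfl
          · rintro (h | ⟨a, _, ha⟩)
            · right; exact Sum.inr_injective h
            · exact absurd ha (by simp)
    have hcard : Nat.card (V ⊕ Fin 5) = Nat.card V + 5 := by
      rw [Nat.card_sum, show Nat.card (Fin 5) = 5 from by simp]
    have hleafcount : {x : V ⊕ Fin 5 | IsLeaf (attach G (SimpleGraph.pathGraph 5) v 0) x}.ncard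
        = {a | IsLeaf G a}.ncard := by
      rw [hleafset, Set.ncard_insert_of_notMem (by simp) ((Set.toFinite _).image _),
        Set.ncard_image_of_injective _ Sum.inl_injective,
        Set.ncard_diff_singleton_add_one (show v ∈ {a | IsLeaf G a} from hvleaf) (Set.toFinite _)]
    constructor
    · rw [hAset, hleafcount, Set.ncard_union_eq (by
          rw [Set.disjoint_left]
          rintro x ⟨a, _, rfl⟩ ⟨c, _, hc⟩
          exact absurd hc (by simp))
        ((Set.toFinite _).image _) ((Set.toFinite _).image _),
        Set.ncard_image_of_injective _ Sum.inl_injective,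
        Set.ncard_image_of_injective _ Sum.inr_injective,
        Set.ncard_pair (by decide), hcard]
      omega
    · intro x hx
      cases x with
      | inl a =>
        have ha : f a = Label.A := by simpa using hx
        have hav : a ≠ v := by
          intro hh
          rw [hh, hv] at ha
          exact absurd ha (by decide)
        rw [ncard_attach_ns_inl hav]
        exact ih2 a ha
      | inr b =>
        have hb : pathLabel b = Label.A := by simpa using hx
        have hb0 : b ≠ 0 := by
          intro hh
          rw [hh] at hb
          exact absurd hb (by decide)
        rw [ncard_attach_ns_inr hb0, ncard_neighborSet_eq_degree]
        fin_cases b <;> first | (exfalso; exact absurd hb (by decide)) | decide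
  | @iso V W G H f e h ih =>
    intro hfin
    have hVfin : Finite V := Finite.of_equiv _ e.toEquiv.symm
    obtain ⟨ih1, ih2⟩ := ih hVfin
    have hns : ∀ a : V, (H.neighborSet (e a)).ncard = (G.neighborSet a).ncard := by
      intro a
      rw [← Nat.card_coe_set_eq, ← Nat.card_coe_set_eq]
      exact Nat.card_congr (e.mapNeighborSet a).symm
    have hleaf : ∀ a : V, IsLeaf H (e a) ↔ IsLeaf G a := by
      intro a
      unfold IsLeaf
      rw [hns]
    constructor
    · have hA : {x | f (e.symm x) = Label.A} = ⇑e.toEquiv '' {a | f a = Label.A} := by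
        ext x
        constructor
        · intro hx
          exact ⟨e.symm x, hx, by simp⟩
        · rintro ⟨a, ha, rfl⟩
          simpa using ha
      have hL : {x | IsLeaf H x} = ⇑e.toEquiv '' {a | IsLeaf G a} := by
        ext x
        constructor
        · intro hx
          exact ⟨e.symm x, by rw [Set.mem_setOf_eq, ← hleaf]; simpa using hx, by simp⟩
        · rintro ⟨a, ha, rfl⟩
          exact (hleaf a).mpr ha
      rw [hA, hL, Set.ncard_image_of_injective _ e.toEquiv.injective,
        Set.ncard_image_of_injective _ e.toEquiv.injective,
        Nat.card_congr e.toEquiv.symm]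
      exact ih1
    · intro x hx
      have : x = e (e.symm x) := by simp
      rw [this, hns]
      exact ih2 _ hx

end AuxProof

/-- If `(T, S) ∈ 𝒯`, then `|S_A| = 2(n(T) − l(T) + 2)/5`. -/
theorem tFamily_card_A_formula {V : Type} [Fintype V] (T : SimpleGraph V)
    (f : V → Label) (hT : T.IsTree) (h : TFamily T f) :
    ({v : V | f v = Label.A}.ncard : ℝ) =
      2 * ((Fintype.card V : ℝ) - ({v : V | IsLeaf T v}.ncard : ℝ) + 2) / 5 := by

  obtain ⟨h1, -⟩ := tFamily_aux h (Finite.of_fintype V)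
  rw [Nat.card_eq_fintype_card] at h1
  have h2 : (5 * ({v : V | f v = Label.A}.ncard : ℝ)
      + 2 * ({v : V | IsLeaf T v}.ncard : ℝ)
      = 2 * (Fintype.card V : ℝ) + 4) := by exact_mod_cast h1
  linarith
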